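/- Let α ≥ 1 and let s be a real number with 0 ≤ s < 1. Then the series ∑_{n=0}^∞ ((−s)^n / n!) · Γ(1 + n/α) converges and ∫₀^∞ e^{-s t} · α t^{α−1} e^{-t^α} dt = ∑_{n=0}^∞ ((−s)^n / n!) · Γ(1 + n/α), where Γ denotes the Gamma function. -/

import Mathlib

open Real MeasureTheory Set

private lemma weibull_moment (α : ℝ) (hα : 1 ≤ α) (n : ℕ) :
    ∫ t in Ioi (0 : ℝ), t ^ n * (α * t ^ (α - 1) * exp (-t ^ α)) = Gamma (1 + n / α) := by
  have hα0 : (0 : ℝ) < α := lt_of_lt_of_le one_pos hα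
  have h1 : ∫ t in Ioi (0 : ℝ), t ^ n * (α * t ^ (α - 1) * exp (-t ^ α))
      = α * ∫ t in Ioi (0 : ℝ), t ^ ((n : ℝ) + α - 1) * exp (-t ^ α) := by
    rw [← integral_const_mul]
    refine setIntegral_congr_fun measurableSet_Ioi (fun t ht => ?_)
    have ht0 : (0 : ℝ) < t := ht
    rw [show (n : ℝ) + α - 1 = (n : ℝ) + (α - 1) by ring, rpow_add ht0, rpow_natCast]
    ring
  rw [h1, integral_rpow_mul_exp_neg_rpow hα0 (by have := n.cast_nonneg (α := ℝ); linarith : (-1 : ℝ) < (n : ℝ) + α - 1)]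
  have : ((n : ℝ) + α - 1 + 1) / α = 1 + n / α := by field_simp; ring
  rw [this, ← mul_assoc, mul_one_div, div_self hα0.ne', one_mul]

private lemma weibull_integrable (α s : ℝ) (hα : 1 ≤ α) (n : ℕ) :
    IntegrableOn (fun t : ℝ => (-s) ^ n / (n.factorial : ℝ) * t ^ n *
      (α * t ^ (α - 1) * exp (-t ^ α))) (Ioi 0) := by
  have hα0 : (0 : ℝ) < α := lt_of_lt_of_le one_pos hα
  have h := integrableOn_rpow_mul_exp_neg_rpow
    (by have := n.cast_nonneg (α := ℝ); linarith : (-1 : ℝ) < (n : ℝ) + α - 1) hα0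
  have h2 : IntegrableOn (fun t : ℝ => (-s) ^ n / (n.factorial : ℝ) * α *
      (t ^ ((n : ℝ) + α - 1) * exp (-t ^ α))) (Ioi 0) :=
    h.const_mul ((-s) ^ n / (n.factorial : ℝ) * α)
  refine IntegrableOn.congr_fun h2 (fun t ht => ?_) measurableSet_Ioi
  have ht0 : (0 : ℝ) < t := ht
  rw [show (n : ℝ) + α - 1 = (n : ℝ) + (α - 1) by ring, rpow_add ht0, rpow_natCast]
  ring

/-- Power-series representation of the Laplace–Stieltjes transform of the Weibull
distribution `W(1, α)` for `α ≥ 1` and `0 ≤ s < 1`: the series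
`∑ₙ ((-s)ⁿ/n!) Γ(1 + n/α)` converges to `∫₀^∞ e^{-st} α t^{α-1} e^{-t^α} dt`. -/
theorem weibull_laplace_series (α s : ℝ) (hα : 1 ≤ α) (hs0 : 0 ≤ s) (hs1 : s < 1) :
    HasSum (fun n : ℕ => (-s) ^ n / (n.factorial : ℝ) * Gamma (1 + n / α))
      (∫ t in Ioi (0 : ℝ), exp (-s * t) * (α * t ^ (α - 1) * exp (-t ^ α))) := by
  have hα0 : (0 : ℝ) < α := lt_of_lt_of_le one_pos hα
  set F : ℕ → ℝ → ℝ := fun n t => (-s) ^ n / (n.factorial : ℝ) * t ^ n *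
      (α * t ^ (α - 1) * exp (-t ^ α)) with hF
  -- norm integral computation
  have hnorm : ∀ n : ℕ, ∫ t in Ioi (0 : ℝ), ‖F n t‖
      = s ^ n / (n.factorial : ℝ) * Gamma (1 + n / α) := by
    intro n
    have : ∫ t in Ioi (0 : ℝ), ‖F n t‖
        = s ^ n / (n.factorial : ℝ) * ∫ t in Ioi (0 : ℝ),
            t ^ n * (α * t ^ (α - 1) * exp (-t ^ α)) := by
      rw [← integral_const_mul]
      refine setIntegral_congr_fun measurableSet_Ioi (fun t ht => ?_)
      have ht0 : (0 : ℝ) < t := ht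
      have hrp : (0 : ℝ) ≤ t ^ (α - 1) := rpow_nonneg ht0.le _
      rw [Real.norm_eq_abs, hF]
      simp only
      rw [abs_mul, abs_mul, abs_div, abs_pow, abs_neg, abs_of_nonneg hs0,
        abs_of_nonneg (by positivity : (0:ℝ) ≤ (n.factorial : ℝ)),
        abs_of_nonneg (by positivity : (0:ℝ) ≤ t ^ n),
        abs_of_nonneg (by positivity : (0:ℝ) ≤ α * t ^ (α - 1) * exp (-t ^ α))]
      ring
    rw [this, weibull_moment α hα n]
  -- summability of the norm integrals
  have hGamma_le : ∀ n : ℕ, Gamma (1 + n / α) ≤ (n.factorial : ℝ) := by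
    intro n
    have h1 : (1 : ℝ) ∈ Ioi (0 : ℝ) := mem_Ioi.mpr one_pos
    have h2 : ((n : ℝ) + 1) ∈ Ioi (0 : ℝ) := by
      simp only [mem_Ioi]; positivity
    have hseg : (1 + (n : ℝ) / α) ∈ segment ℝ (1 : ℝ) ((n : ℝ) + 1) := by
      rw [segment_eq_Icc (by nlinarith : (1:ℝ) ≤ (n:ℝ) + 1)]
      constructor
      · have : (0:ℝ) ≤ (n : ℝ) / α := by positivity
        linarith
      · have : (n : ℝ) / α ≤ (n : ℝ) := by
          rw [div_le_iff₀ hα0]; nlinarith [Nat.cast_nonneg (α := ℝ) n]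
        linarith
    have := convexOn_Gamma.le_on_segment h1 h2 hseg
    calc Gamma (1 + n / α) ≤ max (Gamma 1) (Gamma ((n : ℝ) + 1)) := this
      _ ≤ (n.factorial : ℝ) := by
          rw [Gamma_one, Gamma_nat_eq_factorial]
          exact max_le (by exact_mod_cast n.factorial_pos) le_rfl
  have hsum : Summable fun n : ℕ => ∫ t in Ioi (0 : ℝ), ‖F n t‖ := by
    refine Summable.of_nonneg_of_le (fun n => ?_) (fun n => ?_)
      (summable_geometric_of_lt_one hs0 hs1)
    · rw [hnorm]
      have := Gamma_pos_of_pos (s := 1 + (n : ℝ) / α) (by positivity)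
      positivity
    · rw [hnorm]
      have h := hGamma_le n
      have hf : (0:ℝ) < (n.factorial : ℝ) := by exact_mod_cast n.factorial_pos
      calc s ^ n / (n.factorial : ℝ) * Gamma (1 + n / α)
          ≤ s ^ n / (n.factorial : ℝ) * (n.factorial : ℝ) := by
            apply mul_le_mul_of_nonneg_left h (by positivity)
        _ = s ^ n := by field_simp
  have hint : ∀ n : ℕ, IntegrableOn (F n) (Ioi 0) := weibull_integrable α s hα
  have key := hasSum_integral_of_summable_integral_norm
      (μ := volume.restrict (Ioi (0:ℝ))) hint hsum
  -- identify the integral of the tsum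
  have htsum : ∫ t in Ioi (0 : ℝ), (∑' n, F n t)
      = ∫ t in Ioi (0 : ℝ), exp (-s * t) * (α * t ^ (α - 1) * exp (-t ^ α)) := by
    refine setIntegral_congr_fun measurableSet_Ioi (fun t ht => ?_)
    have hexp : HasSum (fun n : ℕ => (-s * t) ^ n / (n.factorial : ℝ)) (exp (-s * t)) := by
      rw [Real.exp_eq_exp_ℝ]
      exact NormedSpace.expSeries_div_hasSum_exp (-s * t)
    have := (hexp.mul_right (α * t ^ (α - 1) * exp (-t ^ α))).tsum_eq
    rw [← this]
    refine tsum_congr fun n => ?_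
    rw [hF]
    simp only
    rw [mul_pow]
    ring
  -- identify each term
  have hterm : ∀ n : ℕ, ∫ t in Ioi (0 : ℝ), F n t
      = (-s) ^ n / (n.factorial : ℝ) * Gamma (1 + n / α) := by
    intro n
    have : ∫ t in Ioi (0 : ℝ), F n t
        = (-s) ^ n / (n.factorial : ℝ) * ∫ t in Ioi (0 : ℝ),
            t ^ n * (α * t ^ (α - 1) * exp (-t ^ α)) := by
      rw [← integral_const_mul]
      refine setIntegral_congr_fun measurableSet_Ioi (fun t ht => ?_)
      rw [hF]; simp only; ring
    rw [this, weibull_moment α hα n]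
  rw [htsum] at key
  rw [show (fun n : ℕ => (-s) ^ n / (n.factorial : ℝ) * Gamma (1 + n / α)) = fun n => ∫ t in Ioi (0:ℝ), F n t from funext fun n => (hterm n).symm]
  exact key
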